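/- For n ≥ 2 and 0 < μ ≤ (1/n)((n-1)/n)^(n-1), the two positive roots a_-(μ) ≤ a_+(μ) of t^n - t^(n-1) + μ = 0 satisfy μ^(1/(n-1)) ≤ a_-(μ) ≤ (n-1)/n ≤ a_+(μ) ≤ 1. -/

import Mathlib

/-- For `n ≥ 2` and `0 < μ ≤ (1/n)((n-1)/n)^(n-1)`, the two positive roots
`am ≤ ap` of `t^n - t^(n-1) + μ = 0` satisfy `μ^(1/(n-1)) ≤ am ≤ (n-1)/n ≤ ap ≤ 1`. -/
theorem delaunay_polynomial_root_bounds (n : ℕ) (hn : 2 ≤ n) (μ : ℝ)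
    (hμ : 0 < μ) (hμ' : μ ≤ (1 / n) * (((n : ℝ) - 1) / n) ^ (n - 1))
    (am ap : ℝ) (ham : 0 < am) (hle : am ≤ ap)
    (hrootm : am ^ n - am ^ (n - 1) + μ = 0)
    (hrootp : ap ^ n - ap ^ (n - 1) + μ = 0)
    (hall : ∀ t : ℝ, 0 < t → t ^ n - t ^ (n - 1) + μ = 0 → am ≤ t ∧ t ≤ ap) :
    μ ^ (1 / ((n : ℝ) - 1)) ≤ am ∧ am ≤ ((n : ℝ) - 1) / n ∧
      ((n : ℝ) - 1) / n ≤ ap ∧ ap ≤ 1 := by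
  have hn1 : 1 ≤ n := by omega
  have hnR : (2:ℝ) ≤ (n:ℝ) := by exact_mod_cast hn
  have hn0 : (0:ℝ) < n := by linarith
  set c : ℝ := ((n:ℝ)-1)/n with hc
  have hc0 : 0 < c := by
    apply div_pos <;> linarith
  have hc1 : c < 1 := by
    rw [hc, div_lt_one hn0]; linarith
  have hap0 : 0 < ap := lt_of_lt_of_le ham hle
  have hpow : ∀ t : ℝ, t ^ n = t ^ (n-1) * t := by
    intro t; rw [← pow_succ]; congr 1; omega
  have hap1 : ap < 1 := by
    by_contra h
    push_neg at h
    have h2 : ap ^ (n-1) * (ap - 1) + μ = 0 := by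
      rw [← hrootp, hpow]; ring
    nlinarith [pow_pos hap0 (n-1)]
  have ham1 : am < 1 := lt_of_le_of_lt hle hap1
  -- f c ≤ 0
  set f : ℝ → ℝ := fun t => t ^ n - t ^ (n-1) + μ with hf
  have hfc : f c ≤ 0 := by
    have h1 : c - 1 = -(1/n) := by rw [hc]; field_simp; ring
    have h2 : c ^ n - c ^ (n-1) = -(1/n) * c ^ (n-1) := by
      rw [hpow]; nlinarith [h1]
    simp only [hf]
    rw [h2]
    rw [hc]
    nlinarith [hμ']
  have hcont : Continuous f := by fun_prop
  have hf0 : f 0 = μ := by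
    simp only [hf]
    rw [zero_pow (by omega : n ≠ 0), zero_pow (by omega : n - 1 ≠ 0)]
    ring
  have hf1 : f 1 = μ := by simp [hf]
  -- root in [0, c]
  have hamc : am ≤ c := by
    have h0 : (0:ℝ) ∈ Set.Icc (f c) (f 0) := by
      constructor
      · exact hfc
      · rw [hf0]; exact hμ.le
    obtain ⟨r, hr, hfr⟩ := intermediate_value_Icc' hc0.le hcont.continuousOn h0
    have hr0 : 0 < r := by
      rcases lt_or_eq_of_le hr.1 with h | h
      · exact h
      · exfalso; rw [← h] at hfr; rw [hf0] at hfr; linarith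
    have := (hall r hr0 hfr).1
    linarith [hr.2]
  -- root in [c, 1]
  have hcap : c ≤ ap := by
    have h0 : (0:ℝ) ∈ Set.Icc (f c) (f 1) := by
      constructor
      · exact hfc
      · rw [hf1]; exact hμ.le
    obtain ⟨r, hr, hfr⟩ := intermediate_value_Icc hc1.le hcont.continuousOn h0
    have hr0 : 0 < r := lt_of_lt_of_le hc0 hr.1
    have := (hall r hr0 hfr).2
    linarith [hr.1]
  -- lower bound for am
  have hmuam : μ ≤ am ^ (n-1) := by
    have h2 : am ^ (n-1) * (am - 1) + μ = 0 := by
      rw [← hrootm, hpow]; ring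
    nlinarith [pow_pos ham (n-1)]
  have hm1 : ((n-1:ℕ):ℝ) = (n:ℝ) - 1 := by
    push_cast [Nat.cast_sub hn1]; ring
  have hkey : (am ^ (n-1)) ^ (1/((n:ℝ)-1)) = am := by
    rw [← Real.rpow_natCast am (n-1), ← Real.rpow_mul ham.le]
    have hne : (n:ℝ) - 1 ≠ 0 := by linarith
    rw [show ((n-1:ℕ):ℝ) * (1/((n:ℝ)-1)) = 1 by
      rw [hm1]; field_simp]
      
    exact Real.rpow_one am
  have hlb : μ ^ (1/((n:ℝ)-1)) ≤ am := by
    calc μ ^ (1/((n:ℝ)-1)) ≤ (am ^ (n-1)) ^ (1/((n:ℝ)-1)) := by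
          apply Real.rpow_le_rpow hμ.le hmuam
          have : (0:ℝ) < (n:ℝ) - 1 := by linarith
          positivity
      _ = am := hkey
  exact ⟨hlb, hamc, hcap, hap1.le⟩
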